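/- Let ω > 0, γ, D_pp, D_qq, D_pq be real constants and let 𝓛 be the dual Lindbladian (with zero perturbation potential) acting on operators on C_c^∞(ℝ,ℂ). Then for every u ∈ C_c^∞(ℝ,ℂ), 𝓛(pq + qp)u = [ 2(p² − ω² q²) − 2γ(pq + qp) + 4 D_pq ] u. -/

import Mathlib

open MeasureTheory Complex
open scoped ComplexOrder

noncomputable section

/-- Operators acting on complex-valued functions on `ℝ`. -/
abbrev Op : Type := (ℝ → ℂ) → (ℝ → ℂ)

/-- The momentum operator `(p u)(x) = -i u'(x)`. -/
def pOp : Op := fun u x => -Complex.I * deriv u x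

/-- The position operator `(q u)(x) = x * u(x)`. -/
def qOp : Op := fun u x => (x : ℂ) * u x

/-- Multiplication operator by a real-valued function. -/
def mulOp (f : ℝ → ℝ) : Op := fun u x => (f x : ℂ) * u x

/-- Commutator of two operators. -/
def opComm (A B : Op) : Op := fun u => A (B u) - B (A u)

/-- Anticommutator of two operators. -/
def opACom (A B : Op) : Op := fun u => A (B u) + B (A u)

/-- The `L²(ℝ,ℂ)` inner product, antilinear in the first argument. -/
def ip (u v : ℝ → ℂ) : ℂ := ∫ x : ℝ, (starRingEnd ℂ) (u x) * v x

/-- `u ∈ C_c^∞(ℝ,ℂ)`: smooth and compactly supported. -/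
def IsTest (u : ℝ → ℂ) : Prop := ContDiff ℝ (⊤ : ℕ∞) u ∧ HasCompactSupport u

/-- The dual Lindbladian (zero perturbation potential):
`𝓛(A) = (i/2)[p² + ω² q², A] + iγ{p,[q,A]} − D_qq [p,[p,A]] − D_pp [q,[q,A]] + 2 D_pq [q,[p,A]]`. -/
def Lind (ω γ Dpp Dqq Dpq : ℝ) (A : Op) : Op :=
  (Complex.I / 2) • opComm (fun u => pOp (pOp u) + ((ω^2 : ℝ) : ℂ) • qOp (qOp u)) A
  + (Complex.I * (γ : ℂ)) • opACom pOp (opComm qOp A)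
  - (Dqq : ℂ) • opComm pOp (opComm pOp A)
  - (Dpp : ℂ) • opComm qOp (opComm qOp A)
  + ((2 * Dpq : ℝ) : ℂ) • opComm qOp (opComm pOp A)

set_option maxHeartbeats 2000000 in
/-- `𝓛(pq + qp) = 2(p² − ω² q²) − 2γ(pq + qp) + 4 D_pq` on `C_c^∞(ℝ,ℂ)`. -/
theorem Lind_of_pq_qp (ω γ Dpp Dqq Dpq : ℝ) (hω : 0 < ω)
    (u : ℝ → ℂ) (hu : IsTest u) :
    Lind ω γ Dpp Dqq Dpq (opACom pOp qOp) u =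
      (((2 : ℝ) : ℂ) • (fun v => pOp (pOp v) - ((ω^2 : ℝ) : ℂ) • qOp (qOp v) : Op)
        + ((-(2*γ) : ℝ) : ℂ) • opACom pOp qOp
        + ((4*Dpq : ℝ) : ℂ) • (fun v => v : Op)) u := by
  have hs := hu.1
  have h0 : Differentiable ℝ u := hs.differentiable (by simp)
  have hs1 : ContDiff ℝ (⊤ : ℕ∞) (deriv u) := (contDiff_infty_iff_deriv.mp hs).2
  have h1 : Differentiable ℝ (deriv u) := hs1.differentiable (by simp)
  have hs2 : ContDiff ℝ (⊤ : ℕ∞) (deriv (deriv u)) := (contDiff_infty_iff_deriv.mp hs1).2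
  have h2 : Differentiable ℝ (deriv (deriv u)) := hs2.differentiable (by simp)
  have hre : Differentiable ℝ (fun y : ℝ => (y:ℂ)) := Complex.ofRealCLM.differentiable
  have hdre : deriv (fun y : ℝ => (y:ℂ)) = fun _ => 1 := by
    funext y
    have : HasDerivAt (fun y : ℝ => (y:ℂ)) 1 y := by
      simpa using (hasDerivAt_id y).ofReal_comp
    exact this.deriv
  have pdef : pOp = fun (v : ℝ → ℂ) (x : ℝ) => -Complex.I * deriv v x := rfl
  have qdef : qOp = fun (v : ℝ → ℂ) (x : ℝ) => (x : ℂ) * v x := rfl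
  funext x
  simp only [Lind, opComm, opACom, pdef, qdef, Pi.add_def, Pi.sub_def, Pi.neg_def,
    Pi.smul_def, smul_eq_mul]
  simp (disch := fun_prop) only [deriv_fun_add, deriv_fun_sub, deriv_fun_mul, deriv_const', hdre,
    deriv_neg, deriv_const_mul_field']
  have hI : (Complex.I)^2 = -1 := Complex.I_sq
  push_cast
  linear_combination (-2*deriv (deriv u) x*Complex.I^2 - (2*(γ:ℂ)*u x + 4*(γ:ℂ)*(x:ℂ)*deriv u x)*Complex.I
    + 2*(ω:ℂ)^2*(x:ℂ)^2*u x - 4*(Dpq:ℂ)*u x) * hI
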